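/- arXiv:2407.13711 — 2 statements merged into one kernel-verified Lean document; each statement's English description precedes it below -/
import Mathlib

section
/- Let H be a Hilbert space continuously embedded in a Banach space B via a compact embedding ι, F ⊆ B nonempty closed with the Heine-Borel property and H ∩ F nonempty. Suppose Φ : B → ℝ is continuous and there exist constants K ∈ ℝ and α > 0 such that J(f) := Φ(f) + (1/2)‖f‖_H² satisfies J(f) ≥ K + α‖f‖_H² for all f ∈ H. Let λ_n → 0 with λ_n > 0 and let f_n ∈ H minimize J^{λ_n}(f) := J(f) + (1/(2λ_n²)) d_B(f, F)². Then {f_n} has an H-weakly convergent subsequence whose limit f* lies in H ∩ F, and f* minimizes J over H ∩ F. -/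
open Filter Topology Metric

/-- Proposition 3.2: convergence of minimizers of the relaxed FSP objective. -/
theorem relaxed_objective_minimizers_converge
    {H B : Type*} [NormedAddCommGroup H] [InnerProductSpace ℝ H] [CompleteSpace H]
    [NormedAddCommGroup B] [NormedSpace ℝ B] [CompleteSpace B]
    (ι : H →L[ℝ] B) (hιinj : Function.Injective ι) (hιcpt : IsCompactOperator ι)
    (F : Set B) (hFne : F.Nonempty) (hFclosed : IsClosed F)
    (hHB : ∀ S : Set B, S ⊆ F → IsClosed S → Bornology.IsBounded S → IsCompact S)
    (hinter : ∃ f : H, ι f ∈ F)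
    (Φ : B → ℝ) (hΦcont : Continuous Φ)
    (J : H → ℝ) (hJ : ∀ f : H, J f = Φ (ι f) + (1 / 2) * ‖f‖ ^ 2)
    (K α : ℝ) (hα : 0 < α) (hcoercive : ∀ f : H, J f ≥ K + α * ‖f‖ ^ 2)
    (lam : ℕ → ℝ) (hlampos : ∀ n, 0 < lam n)
    (hlamto0 : Filter.Tendsto lam Filter.atTop (nhds 0))
    (fseq : ℕ → H)
    (hmin : ∀ n, ∀ g : H,
      J (fseq n) + (1 / (2 * lam n ^ 2)) * (Metric.infDist (ι (fseq n)) F) ^ 2 ≤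
        J g + (1 / (2 * lam n ^ 2)) * (Metric.infDist (ι g) F) ^ 2) :
    ∃ (φ : ℕ → ℕ) (fstar : H), StrictMono φ ∧ ι fstar ∈ F ∧
      (∀ g : H, Filter.Tendsto (fun k => (inner ℝ (fseq (φ k)) g : ℝ)) Filter.atTop
        (nhds (inner ℝ fstar g : ℝ))) ∧
      (∀ g : H, ι g ∈ F → J fstar ≤ J g) := by
  classical
  obtain ⟨g₀, hg₀⟩ := hinter
  -- Basic bounds
  have hJleaux : ∀ g : H, ι g ∈ F → ∀ n, J (fseq n) ≤ J g := by
    intro g hg n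
    have hdg : Metric.infDist (ι g) F = 0 := Metric.infDist_zero_of_mem hg
    have h1 := hmin n g
    rw [hdg] at h1
    have hln := hlampos n
    have hc : 0 < 1 / (2 * lam n ^ 2) := by positivity
    have hd : 0 ≤ (Metric.infDist (ι (fseq n)) F) ^ 2 := sq_nonneg _
    nlinarith [mul_nonneg hc.le hd]
  have hJle : ∀ n, J (fseq n) ≤ J g₀ := hJleaux g₀ hg₀
  have hKle : K ≤ J g₀ := by
    have h0 := hcoercive (fseq 0)
    nlinarith [hJle 0, sq_nonneg ‖fseq 0‖, hα.le, mul_nonneg hα.le (sq_nonneg ‖fseq 0‖)]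
  set C : ℝ := (J g₀ - K) / α with hCdef
  have hC0 : 0 ≤ C := div_nonneg (by linarith) hα.le
  have hnorm2 : ∀ n, ‖fseq n‖ ^ 2 ≤ C := by
    intro n
    have h1 := hcoercive (fseq n)
    have h2 := hJle n
    rw [hCdef, le_div_iff₀ hα]
    nlinarith
  set R : ℝ := Real.sqrt C with hRdef
  have hR0 : 0 ≤ R := Real.sqrt_nonneg _
  have hnorm : ∀ n, ‖fseq n‖ ≤ R := by
    intro n
    have := Real.sqrt_le_sqrt (hnorm2 n)
    rwa [Real.sqrt_sq (norm_nonneg _)] at this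
  -- distance to F tends to zero
  have hdist0 : Tendsto (fun n => Metric.infDist (ι (fseq n)) F) atTop (𝓝 0) := by
    have hsq : ∀ n, (Metric.infDist (ι (fseq n)) F) ^ 2 ≤ (J g₀ - K) * (2 * lam n ^ 2) := by
      intro n
      have hdg : Metric.infDist (ι g₀) F = 0 := Metric.infDist_zero_of_mem hg₀
      have h1 := hmin n g₀
      rw [hdg] at h1
      have hln := hlampos n
      have hl : 0 < 2 * lam n ^ 2 := by positivity
      have hJK : K ≤ J (fseq n) := by
        have := hcoercive (fseq n)
        nlinarith [mul_nonneg hα.le (sq_nonneg ‖fseq n‖)]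
      rw [← sub_nonneg]
      have key : (1 / (2 * lam n ^ 2)) * (Metric.infDist (ι (fseq n)) F) ^ 2 ≤ J g₀ - K := by
        nlinarith
      calc (0:ℝ) ≤ (2 * lam n ^ 2) * ((J g₀ - K) - (1 / (2 * lam n ^ 2)) * (Metric.infDist (ι (fseq n)) F) ^ 2) := by
              exact mul_nonneg hl.le (by linarith)
        _ = (J g₀ - K) * (2 * lam n ^ 2) - (Metric.infDist (ι (fseq n)) F) ^ 2 := by
              have hln' : lam n ≠ 0 := (hlampos n).ne'
              field_simp
    have hsq0 : Tendsto (fun n => (Metric.infDist (ι (fseq n)) F) ^ 2) atTop (𝓝 0) := by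
      have hlim : Tendsto (fun n => (J g₀ - K) * (2 * lam n ^ 2)) atTop (𝓝 0) := by
        have h2 : Tendsto (fun n => lam n * lam n) atTop (𝓝 0) := by
          simpa using (hlamto0.mul hlamto0)
        have : Tendsto (fun n => lam n ^ 2) atTop (𝓝 0) :=
          h2.congr fun n => (pow_two (lam n)).symm
        simpa using (this.const_mul 2).const_mul (J g₀ - K)
      exact squeeze_zero (fun n => sq_nonneg _) hsq hlim
    have := (Real.continuous_sqrt.tendsto 0).comp hsq0
    simp only [Real.sqrt_zero] at this
    refine this.congr fun n => ?_
    exact Real.sqrt_sq (Metric.infDist_nonneg)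
  -- Separable subspace containing the sequence
  set V := (Submodule.span ℝ (Set.range fseq)).topologicalClosure with hVdef
  have hfV : ∀ n, fseq n ∈ V :=
    fun n => Submodule.le_topologicalClosure _ (Submodule.subset_span ⟨n, rfl⟩)
  haveI : CompleteSpace V := (Submodule.isClosed_topologicalClosure _).completeSpace_coe
  have hsep : TopologicalSpace.IsSeparable (V : Set H) := by
    rw [hVdef, Submodule.topologicalClosure_coe]
    exact (Set.countable_range fseq).isSeparable.span.closure
  obtain ⟨c, hc_count, hc_sub⟩ := hsep
  have hc_ne : c.Nonempty := by
    rcases Set.eq_empty_or_nonempty c with h | h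
    · exfalso
      have : (0 : H) ∈ closure c := hc_sub (Submodule.zero_mem V)
      rw [h] at this; simpa using this
    · exact h
  obtain ⟨d, hd⟩ := hc_count.exists_eq_range hc_ne
  -- Diagonal extraction via compactness in ℕ → ℝ
  set u : ℕ → ℕ → ℝ := fun n i => (inner ℝ (fseq n) (d i) : ℝ) with hudef
  have huS : ∀ n, u n ∈ Set.univ.pi (fun i => Set.Icc (-(R * ‖d i‖)) (R * ‖d i‖)) := by
    intro n i _
    have h1 : |u n i| ≤ R * ‖d i‖ := by
      refine (abs_real_inner_le_norm _ _).trans ?_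
      exact mul_le_mul_of_nonneg_right (hnorm n) (norm_nonneg _)
    exact abs_le.1 h1
  obtain ⟨ℓ, -, φ, hφ, hconv⟩ :=
    (isCompact_univ_pi fun i => isCompact_Icc).tendsto_subseq huS
  have hconv' : ∀ i, Tendsto (fun k => u (φ k) i) atTop (𝓝 (ℓ i)) := by
    rw [tendsto_pi_nhds] at hconv
    exact fun i => hconv i
  -- every inner ℝ product converges along φ
  have key : ∀ g : H, ∃ L : ℝ, Tendsto (fun k => (inner ℝ (fseq (φ k)) g : ℝ)) atTop (𝓝 L) := by
    intro g
    set Pg : H := (V.orthogonalProjectionOnto g : H) with hPgdef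
    have hrw : ∀ n, (inner ℝ (fseq n) g : ℝ) = (inner ℝ (fseq n) Pg : ℝ) := by
      intro n
      have horth : g - Pg ∈ Vᗮ := V.sub_starProjection_mem_orthogonal g
      have h0 : (inner ℝ (fseq n) (g - Pg) : ℝ) = 0 :=
        (Submodule.mem_orthogonal V _).1 horth _ (hfV n)
      rw [inner_sub_right] at h0
      linarith
    have hPgcl : Pg ∈ closure (Set.range d) := by
      rw [← hd]; exact hc_sub (V.orthogonalProjectionOnto g).2
    have hcauchy : CauchySeq (fun k => (inner ℝ (fseq (φ k)) Pg : ℝ)) := by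
      rw [Metric.cauchySeq_iff]
      intro ε hε
      have hden : (0:ℝ) < 2 * R + 2 := by linarith
      set ε' : ℝ := ε / (2 * R + 2) with hε'def
      have hε' : 0 < ε' := div_pos hε hden
      obtain ⟨y, hy_mem, hy⟩ := Metric.mem_closure_iff.1 hPgcl ε' hε'
      obtain ⟨i, rfl⟩ := hy_mem
      have hCi : CauchySeq (fun k => u (φ k) i) := (hconv' i).cauchySeq
      rw [Metric.cauchySeq_iff] at hCi
      obtain ⟨N, hN⟩ := hCi ε' hε'
      refine ⟨N, fun m hm n hn => ?_⟩
      have h1 : dist (u (φ m) i) (u (φ n) i) < ε' := hN m hm n hn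
      have hdist_eq : dist ((inner ℝ (fseq (φ m)) Pg : ℝ)) ((inner ℝ (fseq (φ n)) Pg : ℝ))
          = |(inner ℝ (fseq (φ m) - fseq (φ n)) Pg : ℝ)| := by
        rw [Real.dist_eq, inner_sub_left]
      rw [hdist_eq]
      have hsplit : (inner ℝ (fseq (φ m) - fseq (φ n)) Pg : ℝ)
          = (inner ℝ (fseq (φ m) - fseq (φ n)) (d i) : ℝ)
            + (inner ℝ (fseq (φ m) - fseq (φ n)) (Pg - d i) : ℝ) := by
        rw [← inner_add_right]; congr 1; abel
      have hterm2 : |(inner ℝ (fseq (φ m) - fseq (φ n)) (Pg - d i) : ℝ)| ≤ (2 * R) * ε' := by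
        refine (abs_real_inner_le_norm _ _).trans ?_
        have hn1 : ‖fseq (φ m) - fseq (φ n)‖ ≤ 2 * R := by
          calc ‖fseq (φ m) - fseq (φ n)‖ ≤ ‖fseq (φ m)‖ + ‖fseq (φ n)‖ := norm_sub_le _ _
            _ ≤ 2 * R := by linarith [hnorm (φ m), hnorm (φ n)]
        have hn2 : ‖Pg - d i‖ ≤ ε' := by
          rw [← dist_eq_norm]
          exact hy.le
        exact mul_le_mul hn1 hn2 (norm_nonneg _) (by linarith)
      have hterm1 : |(inner ℝ (fseq (φ m) - fseq (φ n)) (d i) : ℝ)| < ε' := by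
        have : (inner ℝ (fseq (φ m) - fseq (φ n)) (d i) : ℝ) = u (φ m) i - u (φ n) i := by
          rw [hudef]; simp [inner_sub_left]
        rw [this, ← Real.dist_eq]
        exact h1
      calc |(inner ℝ (fseq (φ m) - fseq (φ n)) Pg : ℝ)|
          ≤ |(inner ℝ (fseq (φ m) - fseq (φ n)) (d i) : ℝ)|
            + |(inner ℝ (fseq (φ m) - fseq (φ n)) (Pg - d i) : ℝ)| := by
            rw [hsplit]; exact abs_add_le _ _
        _ < ε' + (2 * R) * ε' := by linarith
        _ ≤ ε := by
            have : ε' * (2 * R + 2) = ε := by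
              rw [hε'def]; field_simp
            nlinarith
    obtain ⟨L, hL⟩ := cauchySeq_tendsto_of_complete hcauchy
    exact ⟨L, by simpa only [← hrw] using hL⟩
  choose Lim hLim using key
  -- Lim is a bounded linear functional; fstar by Riesz
  have hLim_bound : ∀ g : H, |Lim g| ≤ R * ‖g‖ := by
    intro g
    refine le_of_tendsto (hLim g).abs (Filter.Eventually.of_forall fun k => ?_)
    exact (abs_real_inner_le_norm _ _).trans
      (mul_le_mul_of_nonneg_right (hnorm _) (norm_nonneg _))
  have hadd : ∀ x y : H, Lim (x + y) = Lim x + Lim y := by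
    intro x y
    refine tendsto_nhds_unique ?_ ((hLim x).add (hLim y))
    exact (hLim (x + y)).congr fun k => by rw [inner_add_right]
  have hsmul : ∀ (a : ℝ) (x : H), Lim (a • x) = a * Lim x := by
    intro a x
    refine tendsto_nhds_unique ?_ ((hLim x).const_mul a)
    exact (hLim (a • x)).congr fun k => by rw [real_inner_smul_right]
  obtain ⟨fstar, hfstar⟩ : ∃ f : H, ∀ g : H, (inner ℝ f g : ℝ) = Lim g := by
    let Lmap : H →ₗ[ℝ] ℝ :=
      { toFun := Lim, map_add' := hadd, map_smul' := fun a x => by simpa using hsmul a x }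
    refine ⟨(InnerProductSpace.toDual ℝ H).symm (Lmap.mkContinuous R (fun x => by
      rw [Real.norm_eq_abs]; exact hLim_bound x)), fun g => ?_⟩
    exact InnerProductSpace.toDual_symm_apply
  have hweak : ∀ g : H, Tendsto (fun k => (inner ℝ (fseq (φ k)) g : ℝ)) atTop
      (𝓝 (inner ℝ fstar g : ℝ)) := fun g => (hfstar g) ▸ hLim g
  -- weak convergence of images under any dual functional of B
  have hweakB : ∀ ψ : B →L[ℝ] ℝ,
      Tendsto (fun k => ψ (ι (fseq (φ k)))) atTop (𝓝 (ψ (ι fstar))) := by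
    intro ψ
    set h : H := (InnerProductSpace.toDual ℝ H).symm (ψ.comp ι) with hhdef
    have hψ : ∀ x : H, ψ (ι x) = (inner ℝ h x : ℝ) := by
      intro x
      rw [hhdef, InnerProductSpace.toDual_symm_apply]
      rfl
    have heq : ∀ k, (inner ℝ (fseq (φ k)) h : ℝ) = ψ (ι (fseq (φ k))) := fun k => by
      rw [hψ (fseq (φ k)), real_inner_comm]
    have h2 := (hweak h).congr heq
    rw [hψ fstar, real_inner_comm]
    exact h2
  -- strong convergence of images along a further subsequence
  have hcpt2 : IsCompact (closure (ι '' Metric.closedBall 0 R)) :=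
    IsCompactOperator.isCompact_closure_image_closedBall (𝕜₁ := ℝ) (f := (ι : H →ₗ[ℝ] B)) hιcpt R
  have hmem : ∀ k, ι (fseq (φ k)) ∈ closure (ι '' Metric.closedBall 0 R) := by
    intro k
    exact subset_closure ⟨fseq (φ k), by
      simpa [Metric.mem_closedBall, dist_zero_right] using hnorm (φ k), rfl⟩
  obtain ⟨b, -, ρ, hρ, hbconv⟩ := hcpt2.tendsto_subseq hmem
  have hbconv' : Tendsto (fun k => ι (fseq (φ (ρ k)))) atTop (𝓝 b) := hbconv
  -- identify the strong limit with ι fstar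
  have hb : b = ι fstar := by
    refine (NormedSpace.eq_iff_forall_dual_eq ℝ).2 fun ψ => ?_
    have h1 : Tendsto (fun k => ψ (ι (fseq (φ (ρ k))))) atTop (𝓝 (ψ b)) :=
      (ψ.continuous.tendsto b).comp hbconv'
    have h2 : Tendsto (fun k => ψ (ι (fseq (φ (ρ k))))) atTop (𝓝 (ψ (ι fstar))) :=
      (hweakB ψ).comp hρ.tendsto_atTop
    exact tendsto_nhds_unique h1 h2
  rw [hb] at hbconv'
  -- membership in F
  have hmemF : ι fstar ∈ F := by
    have h1 : Tendsto (fun k => Metric.infDist (ι (fseq (φ (ρ k)))) F) atTop (𝓝 0) :=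
      hdist0.comp ((hφ.comp hρ).tendsto_atTop)
    have h2 : Tendsto (fun k => Metric.infDist (ι (fseq (φ (ρ k)))) F) atTop
        (𝓝 (Metric.infDist (ι fstar) F)) :=
      ((Metric.continuous_infDist_pt F).tendsto _).comp hbconv'
    have h0 : Metric.infDist (ι fstar) F = 0 := tendsto_nhds_unique h2 h1
    exact (hFclosed.mem_iff_infDist_zero hFne).2 h0
  -- assemble
  refine ⟨φ ∘ ρ, fstar, hφ.comp hρ, hmemF, ?_, ?_⟩
  · intro g
    exact (hweak g).comp hρ.tendsto_atTop
  · intro g hg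
    have hJg : ∀ n, J (fseq n) ≤ J g := hJleaux g hg
    have hbound : ∀ k, Φ (ι (fseq (φ (ρ k))))
        + (1 / 2) * (2 * (inner ℝ (fseq (φ (ρ k))) fstar : ℝ) - ‖fstar‖ ^ 2) ≤ J g := by
      intro k
      have h1 := hJg (φ (ρ k))
      rw [hJ] at h1
      nlinarith [norm_sub_sq_real (fseq (φ (ρ k))) fstar, sq_nonneg ‖fseq (φ (ρ k)) - fstar‖]
    have hlhs : Tendsto (fun k => Φ (ι (fseq (φ (ρ k))))
        + (1 / 2) * (2 * (inner ℝ (fseq (φ (ρ k))) fstar : ℝ) - ‖fstar‖ ^ 2)) atTop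
        (𝓝 (Φ (ι fstar) + (1 / 2) * (2 * (inner ℝ fstar fstar : ℝ) - ‖fstar‖ ^ 2))) := by
      refine Tendsto.add ?_ ?_
      · exact (hΦcont.tendsto _).comp hbconv'
      · exact ((((hweak fstar).comp hρ.tendsto_atTop).const_mul 2).sub_const _).const_mul _
    have hJfstar : Φ (ι fstar) + (1 / 2) * (2 * (inner ℝ fstar fstar : ℝ) - ‖fstar‖ ^ 2)
        = J fstar := by
      rw [hJ, real_inner_self_eq_norm_sq]; ring
    rw [hJfstar] at hlhs
    exact le_of_tendsto hlhs (Filter.Eventually.of_forall hbound)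
end

section
/- Under the setting of the previous statement, if f_n minimizes J^{λ_n} and the subsequence f_{n_k} converges weakly in H to f*, then lim_{k→∞} (1/(2λ_{n_k}²)) d_B(f_{n_k}, F)² = 0 along a further subsequence, i.e., the penalty term vanishes in the limit. -/
open Filter Metric Topology

/-- In the setting of Proposition 3.2, the penalty term vanishes along a further
subsequence of any weakly convergent subsequence of the minimizers. -/
theorem relaxed_objective_penalty_vanishes
    {H B : Type*} [NormedAddCommGroup H] [InnerProductSpace ℝ H] [CompleteSpace H]
    [NormedAddCommGroup B] [NormedSpace ℝ B] [CompleteSpace B]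
    (ι : H →L[ℝ] B) (hιinj : Function.Injective ι) (hιcpt : IsCompactOperator ι)
    (F : Set B) (hFne : F.Nonempty) (hFclosed : IsClosed F)
    (hHB : ∀ S : Set B, S ⊆ F → IsClosed S → Bornology.IsBounded S → IsCompact S)
    (hinter : ∃ f : H, ι f ∈ F)
    (Φ : B → ℝ) (hΦcont : Continuous Φ)
    (J : H → ℝ) (hJ : ∀ f : H, J f = Φ (ι f) + (1 / 2) * ‖f‖ ^ 2)
    (K α : ℝ) (hα : 0 < α) (hcoercive : ∀ f : H, J f ≥ K + α * ‖f‖ ^ 2)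
    (lam : ℕ → ℝ) (hlampos : ∀ n, 0 < lam n)
    (hlamto0 : Filter.Tendsto lam Filter.atTop (nhds 0))
    (fseq : ℕ → H)
    (hmin : ∀ n, ∀ g : H,
      J (fseq n) + (1 / (2 * lam n ^ 2)) * (Metric.infDist (ι (fseq n)) F) ^ 2 ≤
        J g + (1 / (2 * lam n ^ 2)) * (Metric.infDist (ι g) F) ^ 2)
    (φ : ℕ → ℕ) (hφ : StrictMono φ) (fstar : H)
    (hweak : ∀ g : H, Filter.Tendsto (fun k => (inner ℝ (fseq (φ k)) g : ℝ)) Filter.atTop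
      (nhds (inner ℝ fstar g : ℝ))) :
    ∃ ψ : ℕ → ℕ, StrictMono ψ ∧
      Filter.Tendsto
        (fun k => (1 / (2 * lam (φ (ψ k)) ^ 2)) *
          (Metric.infDist (ι (fseq (φ (ψ k)))) F) ^ 2)
        Filter.atTop (nhds 0) := by
  obtain ⟨g₀, hg₀⟩ := hinter
  set C := J g₀ with hC
  have hlamne : ∀ n, lam n ≠ 0 := fun n => (hlampos n).ne'
  have hpen_nonneg : ∀ n, 0 ≤ (1 / (2 * lam n ^ 2)) * (Metric.infDist (ι (fseq n)) F) ^ 2 := by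
    intro n
    have h1 : (0:ℝ) < lam n := hlampos n
    positivity
  have hdg₀ : Metric.infDist (ι g₀) F = 0 := Metric.infDist_zero_of_mem hg₀
  have hbound : ∀ n, J (fseq n) + (1 / (2 * lam n ^ 2)) * (Metric.infDist (ι (fseq n)) F) ^ 2 ≤ C := by
    intro n
    have := hmin n g₀
    simpa [hdg₀] using this
  have hJK : ∀ n, K ≤ J (fseq n) := fun n => by
    have := hcoercive (fseq n); nlinarith [sq_nonneg ‖fseq n‖]
  have hJle : ∀ n, J (fseq n) ≤ C := fun n =>
    le_trans (le_add_of_nonneg_right (hpen_nonneg n)) (hbound n)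
  have hCK : 0 ≤ C - K := by linarith [hJK 0, hJle 0]
  -- norm bound
  set M : ℝ := Real.sqrt ((C - K) / α) with hMdef
  have hnormM : ∀ n, ‖fseq n‖ ≤ M := by
    intro n
    have h1 : α * ‖fseq n‖ ^ 2 ≤ C - K := by
      have := hcoercive (fseq n); linarith [hJle n]
    have h2 : ‖fseq n‖ ^ 2 ≤ (C - K) / α := (le_div_iff₀' hα).2 h1
    calc ‖fseq n‖ = Real.sqrt (‖fseq n‖ ^ 2) := (Real.sqrt_sq (norm_nonneg _)).symm
      _ ≤ M := Real.sqrt_le_sqrt h2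
  -- distance to F tends to 0
  have hdsq : ∀ n, (Metric.infDist (ι (fseq n)) F) ^ 2 ≤ lam n ^ 2 * (2 * (C - K)) := by
    intro n
    have h1 : (1 / (2 * lam n ^ 2)) * (Metric.infDist (ι (fseq n)) F) ^ 2 ≤ C - K := by
      linarith [hbound n, hJK n]
    have h2 : (0:ℝ) < 2 * lam n ^ 2 := by have := hlampos n; positivity
    rw [one_div, inv_mul_le_iff₀ h2] at h1
    nlinarith [h1]
  have hdto0 : Tendsto (fun n => Metric.infDist (ι (fseq n)) F) atTop (𝓝 0) := by
    have hup : ∀ n, Metric.infDist (ι (fseq n)) F ≤ lam n * Real.sqrt (2 * (C - K)) := by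
      intro n
      calc Metric.infDist (ι (fseq n)) F
          = Real.sqrt ((Metric.infDist (ι (fseq n)) F) ^ 2) :=
            (Real.sqrt_sq Metric.infDist_nonneg).symm
        _ ≤ Real.sqrt (lam n ^ 2 * (2 * (C - K))) := Real.sqrt_le_sqrt (hdsq n)
        _ = lam n * Real.sqrt (2 * (C - K)) := by
            rw [Real.sqrt_mul (sq_nonneg _), Real.sqrt_sq (hlampos n).le]
    have hg : Tendsto (fun n => lam n * Real.sqrt (2 * (C - K))) atTop (𝓝 0) := by
      have := hlamto0.mul_const (Real.sqrt (2 * (C - K)))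
      simpa using this
    exact squeeze_zero (fun n => Metric.infDist_nonneg) hup hg
  -- strong convergence of images along a further subsequence
  have hcpt : IsCompact (closure ((ι : H →ₗ[ℝ] B) '' Metric.closedBall 0 M)) :=
    IsCompactOperator.isCompact_closure_image_closedBall (𝕜₁ := ℝ) hιcpt M
  have hmem : ∀ k, ι (fseq (φ k)) ∈ closure ((ι : H →ₗ[ℝ] B) '' Metric.closedBall 0 M) := by
    intro k
    exact subset_closure ⟨fseq (φ k), by simpa using hnormM (φ k), rfl⟩
  obtain ⟨b, hbmem, ψ₁, hψ₁, hψ₁t⟩ := hcpt.tendsto_subseq hmem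
  -- norms converge along a further subsequence
  have hmem2 : ∀ k, ‖fseq (φ (ψ₁ k))‖ ∈ Set.Icc (0:ℝ) M :=
    fun k => ⟨norm_nonneg _, hnormM _⟩
  obtain ⟨L, hLmem, ψ₂, hψ₂, hψ₂t⟩ := (isCompact_Icc).tendsto_subseq hmem2
  set ψ : ℕ → ℕ := ψ₁ ∘ ψ₂ with hψdef
  have hψmono : StrictMono ψ := hψ₁.comp hψ₂
  set n' : ℕ → ℕ := fun k => φ (ψ k) with hn'
  -- identify b = ι fstar
  have hbeq : b = ι fstar := by
    rw [NormedSpace.eq_iff_forall_dual_eq ℝ]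
    intro g
    have hrep : ∀ x : H, (inner ℝ x ((InnerProductSpace.toDual ℝ H).symm (g.comp ι)) : ℝ)
        = g (ι x) := by
      intro x
      rw [real_inner_comm]
      exact InnerProductSpace.toDual_symm_apply
    have t1 : Tendsto (fun k => g (ι (fseq (φ (ψ₁ k))))) atTop (𝓝 (g b)) :=
      (g.continuous.tendsto b).comp hψ₁t
    have t2 : Tendsto (fun k => g (ι (fseq (φ (ψ₁ k))))) atTop (𝓝 (g (ι fstar))) := by
      have hw := (hweak ((InnerProductSpace.toDual ℝ H).symm (g.comp ι))).comp
        (hψ₁.tendsto_atTop)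
      simpa only [Function.comp_def, hrep] using hw
    exact tendsto_nhds_unique t1 t2
  -- ι fstar ∈ F
  have hstarF : ι fstar ∈ F := by
    have hd1 : Tendsto (fun k => Metric.infDist (ι (fseq (φ (ψ₁ k)))) F) atTop (𝓝 0) :=
      hdto0.comp ((hφ.comp hψ₁).tendsto_atTop)
    have hd2 : Tendsto (fun k => Metric.infDist (ι (fseq (φ (ψ₁ k)))) F) atTop
        (𝓝 (Metric.infDist b F)) :=
      ((Metric.continuous_infDist_pt F).tendsto b).comp hψ₁t
    have : Metric.infDist b F = 0 := tendsto_nhds_unique hd2 hd1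
    rw [hbeq] at this
    exact (hFclosed.mem_iff_infDist_zero hFne).2 this
  have hdstar : Metric.infDist (ι fstar) F = 0 := Metric.infDist_zero_of_mem hstarF
  -- penalty bound via minimality against fstar
  have hck : ∀ k, (1 / (2 * lam (n' k) ^ 2)) * (Metric.infDist (ι (fseq (n' k))) F) ^ 2
      ≤ J fstar - J (fseq (n' k)) := by
    intro k
    have := hmin (n' k) fstar
    simp only [hdstar] at this
    nlinarith [this]
  -- limit of upper bound
  have hΦt : Tendsto (fun k => Φ (ι (fseq (n' k)))) atTop (𝓝 (Φ b)) :=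
    (hΦcont.tendsto b).comp (hψ₁t.comp hψ₂.tendsto_atTop)
  have hnt : Tendsto (fun k => ‖fseq (n' k)‖) atTop (𝓝 L) := hψ₂t
  have hctend : Tendsto (fun k => J fstar - J (fseq (n' k))) atTop
      (𝓝 (J fstar - (Φ b + (1 / 2) * L ^ 2))) := by
    have h2 : Tendsto (fun k => Φ (ι (fseq (n' k))) + (1 / 2) * ‖fseq (n' k)‖ ^ 2) atTop
        (𝓝 (Φ b + (1 / 2) * L ^ 2)) :=
      hΦt.add ((hnt.pow 2).const_mul (1 / 2 : ℝ))
    simp only [hJ]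
    exact tendsto_const_nhds.sub h2
  -- L ≥ ‖fstar‖
  have hLge : ‖fstar‖ ≤ L := by
    have hip : Tendsto (fun k => (inner ℝ (fseq (n' k)) fstar : ℝ)) atTop
        (𝓝 (inner ℝ fstar fstar : ℝ)) := (hweak fstar).comp ((hψ₁.comp hψ₂).tendsto_atTop)
    have hub : ∀ k, (inner ℝ (fseq (n' k)) fstar : ℝ) ≤ ‖fseq (n' k)‖ * ‖fstar‖ :=
      fun k => real_inner_le_norm _ _
    have hmt : Tendsto (fun k => ‖fseq (n' k)‖ * ‖fstar‖) atTop (𝓝 (L * ‖fstar‖)) :=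
      hnt.mul_const _
    have h1 : (inner ℝ fstar fstar : ℝ) ≤ L * ‖fstar‖ :=
      le_of_tendsto_of_tendsto' hip hmt hub
    rw [real_inner_self_eq_norm_sq] at h1
    have hL0 : (0:ℝ) ≤ L := hLmem.1
    nlinarith [norm_nonneg fstar]
  -- the limit of the upper bound is 0
  have h0le : 0 ≤ J fstar - (Φ b + (1 / 2) * L ^ 2) :=
    ge_of_tendsto' hctend (fun k => le_trans (hpen_nonneg (n' k)) (hck k))
  have hle0 : J fstar - (Φ b + (1 / 2) * L ^ 2) ≤ 0 := by
    rw [hJ fstar, hbeq]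
    nlinarith [norm_nonneg fstar, hLge]
  have hzero : J fstar - (Φ b + (1 / 2) * L ^ 2) = 0 := le_antisymm hle0 h0le
  refine ⟨ψ, hψmono, ?_⟩
  have := squeeze_zero (f := fun k => (1 / (2 * lam (n' k) ^ 2)) *
      (Metric.infDist (ι (fseq (n' k))) F) ^ 2)
    (fun k => hpen_nonneg (n' k)) hck (by rw [hzero] at hctend; exact hctend)
  exact this
end
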